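/- Let u, v ∈ ℝ³ be distinct points and ε > 0, and let Δ be the isoceles triangle in a plane containing the segment e(u,v), with base e(u,v) and height ε. If θ = arctan(2ε/‖v − u‖), then Δ is contained in the intersection of the two solid cones C(θ', u, v − u) and C(θ', v, u − v) for any θ' ≥ θ; in particular for θ' = 2ε/‖v − u‖. -/

import Mathlib

open Set InnerProductGeometry Real

private lemma arccos_anti {x y : ℝ} (h : x ≤ y) : Real.arccos y ≤ Real.arccos x := by
  unfold Real.arccos
  have := Real.monotone_arcsin h
  linarith

private lemma aux_angle {E : Type*} [NormedAddCommGroup E] [InnerProductSpace ℝ E]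
    (y w : E) (hw : ‖w‖ = 1) (hperp : inner ℝ w y = (0 : ℝ)) (hy : y ≠ 0)
    {α β t : ℝ} (hα : 0 < α) (hβ : 0 ≤ β) (ht : 0 ≤ t) (hle : β ≤ α * ‖y‖ * t) :
    angle (α • y + β • w) y ≤ Real.arctan t := by
  have hd0 : 0 < ‖y‖ := norm_pos_iff.mpr hy
  set d : ℝ := ‖y‖ with hd
  set x : E := α • y + β • w with hx
  have hperp' : inner ℝ y w = (0 : ℝ) := by rw [real_inner_comm]; exact hperp
  have hinner : inner ℝ x y = (α * d ^ 2 : ℝ) := by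
    rw [hx, inner_add_left, real_inner_smul_left, real_inner_smul_left, hperp,
      real_inner_self_eq_norm_sq]
    ring
  have hnx2 : ‖x‖ ^ 2 = α ^ 2 * d ^ 2 + β ^ 2 := by
    rw [hx, norm_add_sq_real, real_inner_smul_left, inner_smul_right, hperp',
      norm_smul, norm_smul, hw, Real.norm_eq_abs, mul_pow, mul_pow, sq_abs]
    simp [← hd]
  have hxne : x ≠ 0 := by
    intro h
    rw [h] at hnx2
    simp at hnx2
    nlinarith [mul_pos (pow_pos hα 2) (pow_pos hd0 2), sq_nonneg β]
  have hnx_pos : 0 < ‖x‖ := norm_pos_iff.mpr hxne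
  have hsq : 0 < Real.sqrt (1 + t ^ 2) := Real.sqrt_pos.mpr (by positivity)
  -- key bound : ‖x‖ ≤ α * d * sqrt (1 + t^2)
  have hkey : ‖x‖ ≤ α * d * Real.sqrt (1 + t ^ 2) := by
    have h1 : ‖x‖ ^ 2 ≤ (α * d * Real.sqrt (1 + t ^ 2)) ^ 2 := by
      rw [mul_pow, mul_pow, Real.sq_sqrt (by positivity)]
      nlinarith
    have h2 := Real.sqrt_le_sqrt h1
    rwa [Real.sqrt_sq (norm_nonneg x), Real.sqrt_sq (by positivity)] at h2
  have hcos : Real.cos (Real.arctan t) ≤ inner ℝ x y / (‖x‖ * ‖y‖) := by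
    rw [Real.cos_arctan, hinner, ← hd]
    rw [div_le_div_iff₀ hsq (by positivity)]
    calc 1 * (‖x‖ * d) = ‖x‖ * d := by ring
      _ ≤ (α * d * Real.sqrt (1 + t ^ 2)) * d := by nlinarith
      _ = α * d ^ 2 * Real.sqrt (1 + t ^ 2) := by ring
  have h0 : 0 ≤ Real.arctan t := by
    rw [← Real.arctan_zero]; exact Real.arctan_strictMono.monotone ht
  have hpi : Real.arctan t ≤ π := le_trans (Real.arctan_lt_pi_div_two t).le
    (by linarith [Real.pi_pos])
  calc angle x y = Real.arccos (inner ℝ x y / (‖x‖ * ‖y‖)) := rfl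
    _ ≤ Real.arccos (Real.cos (Real.arctan t)) := arccos_anti hcos
    _ = Real.arctan t := Real.arccos_cos h0 hpi

set_option maxHeartbeats 1000000 in
/-- An isoceles triangle with base the segment from `u` to `v` and height `ε` (apex at the
midpoint displaced by `ε` in a direction perpendicular to `v − u`) is contained in both
solid cones of half-angle `θ' ≥ arctan (2ε/‖v − u‖)` with vertices `u, v` and axes
`v − u, u − v`; in particular this applies to `θ' = 2ε/‖v − u‖`. -/
theorem triangle_in_cones
    (u v : EuclideanSpace ℝ (Fin 3)) (huv : u ≠ v) (ε : ℝ) (hε : 0 < ε)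
    (w : EuclideanSpace ℝ (Fin 3)) (hw : ‖w‖ = 1) (hperp : inner ℝ w (v - u) = (0 : ℝ))
    (θ' : ℝ) (hθ' : Real.arctan (2 * ε / ‖v - u‖) ≤ θ') :
    Real.arctan (2 * ε / ‖v - u‖) ≤ 2 * ε / ‖v - u‖ ∧
    ∀ q ∈ convexHull ℝ {u, v, midpoint ℝ u v + ε • w},
      (q = u ∨ angle (q - u) (v - u) ≤ θ') ∧
      (q = v ∨ angle (q - v) (u - v) ≤ θ') := by
  have hvu : v - u ≠ 0 := sub_ne_zero.mpr (Ne.symm huv)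
  have hd0 : 0 < ‖v - u‖ := norm_pos_iff.mpr hvu
  have ht : 0 ≤ 2 * ε / ‖v - u‖ := by positivity
  have harctan0 : 0 ≤ Real.arctan (2 * ε / ‖v - u‖) := by
    rw [← Real.arctan_zero]; exact Real.arctan_strictMono.monotone ht
  constructor
  · have h1 : Real.arctan (2 * ε / ‖v - u‖) ≤ Real.tan (Real.arctan (2 * ε / ‖v - u‖)) :=
      Real.le_tan harctan0 (Real.arctan_lt_pi_div_two _)
    rwa [Real.tan_arctan] at h1
  · intro q hq
    set m : EuclideanSpace ℝ (Fin 3) := midpoint ℝ u v + ε • w with hm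
    rw [show ({u, v, m} : Set (EuclideanSpace ℝ (Fin 3))) = insert u {v, m} from rfl,
      convexHull_insert ⟨v, by simp⟩, mem_convexJoin] at hq
    obtain ⟨a, ha, x, hx, hqx⟩ := hq
    rw [mem_singleton_iff] at ha
    rw [convexHull_pair] at hx
    obtain ⟨p, p', hp, hp', hpp', hxval⟩ := hx
    obtain ⟨s, r, hs, hr, hsr, hqval⟩ := hqx
    rw [ha] at hqval
    have hs' : s = 1 - r := by linarith
    have hp2 : p = 1 - p' := by linarith
    rw [hs'] at hqval hs
    rw [hp2] at hxval hp
    have hmid : midpoint ℝ u v = (2⁻¹ : ℝ) • u + (2⁻¹ : ℝ) • v := by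
      rw [midpoint_eq_smul_add, smul_add]
      norm_num
    have hdecompu : q - u = (r * (1 - p') + r * p' / 2) • (v - u) + (r * p' * ε) • w := by
      rw [← hqval, ← hxval, hm, hmid]
      module
    have hdecompv : q - v = ((1 - r) + r * p' / 2) • (u - v) + (r * p' * ε) • w := by
      rw [← hqval, ← hxval, hm, hmid]
      module
    have hperp2 : inner ℝ w (u - v) = (0 : ℝ) := by
      have h := hperp
      rw [show (v - u : EuclideanSpace ℝ (Fin 3)) = -(u - v) by abel, inner_neg_right,
        neg_eq_zero] at h
      exact h
    have hp1' : (0 : ℝ) ≤ 1 - p' := hp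
    constructor
    · -- cone at u
      by_cases hα : r * (1 - p') + r * p' / 2 = 0
      · left
        have h2 : r * p' = 0 := by
          nlinarith [mul_nonneg hr hp', mul_nonneg hr hp1']
        have : q - u = 0 := by rw [hdecompu, hα, h2]; simp
        exact sub_eq_zero.mp this
      · right
        have hα0 : (0 : ℝ) ≤ r * (1 - p') + r * p' / 2 := by
          nlinarith [mul_nonneg hr hp', mul_nonneg hr hp1']
        have hαpos : 0 < r * (1 - p') + r * p' / 2 := lt_of_le_of_ne hα0 (Ne.symm hα)
        refine le_trans ?_ hθ'
        rw [hdecompu]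
        refine aux_angle (v - u) w hw hperp hvu hαpos
          (by positivity) ht ?_
        have hc : (r * (1 - p') + r * p' / 2) * ‖v - u‖ * (2 * ε / ‖v - u‖)
            = 2 * ε * (r * (1 - p') + r * p' / 2) := by
          field_simp
        rw [hc]
        nlinarith [mul_nonneg hr hp1', hε.le]
    · -- cone at v
      by_cases hα : (1 - r) + r * p' / 2 = 0
      · left
        have h2 : r * p' = 0 := by nlinarith [mul_nonneg hr hp']
        have : q - v = 0 := by rw [hdecompv, hα, h2]; simp
        exact sub_eq_zero.mp this
      · right
        have huv' : u - v ≠ 0 := sub_ne_zero.mpr huv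
        have hα0 : (0 : ℝ) ≤ (1 - r) + r * p' / 2 := by
          nlinarith [mul_nonneg hr hp']
        have hαpos : 0 < (1 - r) + r * p' / 2 := lt_of_le_of_ne hα0 (Ne.symm hα)
        refine le_trans ?_ hθ'
        rw [hdecompv]
        refine aux_angle (u - v) w hw hperp2 huv' hαpos
          (by positivity) ht ?_
        rw [norm_sub_rev]
        have hc : ((1 - r) + r * p' / 2) * ‖v - u‖ * (2 * ε / ‖v - u‖)
            = 2 * ε * ((1 - r) + r * p' / 2) := by
          field_simp
        rw [hc]
        nlinarith [mul_nonneg hr hp', hε.le]
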